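/- Let t ≥ 2, let h be a permutation of {1,…,t}, and take σ = id. Then the sum of ε_{ij} over unordered pairs with i, j ≠ t equals the sum of δ_{ij} over unordered pairs with i, j ≠ 1: Σ_{1≤i<j≤t−1} ε_{ij} = Σ_{2≤i<j≤t} δ_{ij}. -/

import Mathlib

open Finset

/-- `epsBW σ h i j` is the sign ε_{ij} in the B-square: `a` is the element of
`{i,j}` whose vertical strand is further left (smaller `σ`), `b` is the element
whose horizontal strand is higher (larger `h`); ε = 1 if `a > b`, −1 if `a < b`,
0 if `a = b`.  (Strings are indexed 0,…,t−1 instead of 1,…,t.) -/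
def epsBW {t : ℕ} (σ h : Equiv.Perm (Fin t)) (i j : Fin t) : ℤ :=
  let a : Fin t := if σ i < σ j then i else j
  let b : Fin t := if h i < h j then j else i
  if b < a then 1 else if a < b then -1 else 0

/-- The A-square heights: `hA h` is the cyclic relabeling of `h`,
`(hA h) 0 = h (t-1)` and `(hA h) i = h (i-1)` for `i ≥ 1`
(0-indexed version of h′(1) = h(t), h′(i) = h(i−1)). -/
def hA {t : ℕ} (h : Equiv.Perm (Fin t)) : Fin t → Fin t :=
  fun i => h ((finRotate t).symm i)

/-- `deltaBW σ h i j` is the sign δ_{ij} in the A-square: `a'` is the element of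
`{i,j}` whose vertical strand is further right (larger `σ`), `b'` is the element
whose A-square horizontal strand is lower (smaller `hA h`); δ = 1 if `b' > a'`,
−1 if `b' < a'`, 0 if `b' = a'`. -/
def deltaBW {t : ℕ} (σ h : Equiv.Perm (Fin t)) (i j : Fin t) : ℤ :=
  let a' : Fin t := if σ i < σ j then j else i
  let b' : Fin t := if hA h i < hA h j then i else j
  if a' < b' then 1 else if b' < a' then -1 else 0

/-- `N_B = Σ_{i<j} ε_{ij}`. -/
def NB {t : ℕ} (σ h : Equiv.Perm (Fin t)) : ℤ :=
  ∑ p ∈ Finset.univ.filter (fun p : Fin t × Fin t => p.1 < p.2), epsBW σ h p.1 p.2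

/-- `N_A = Σ_{i<j} δ_{ij}`. -/
def NA {t : ℕ} (σ h : Equiv.Perm (Fin t)) : ℤ :=
  ∑ p ∈ Finset.univ.filter (fun p : Fin t × Fin t => p.1 < p.2), deltaBW σ h p.1 p.2

/-- With `σ = id`, the sum of `ε_{ij}` over unordered pairs with `i, j ≠ t`
(0-indexed: both coordinates different from `t-1`) equals the sum of `δ_{ij}`
over unordered pairs with `i, j ≠ 1` (0-indexed: both coordinates nonzero). -/
lemma coe_finRotate_of_lt {n : ℕ} {i : Fin (n+1)} (hi : (i : ℕ) + 1 < n + 1) :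
    ((finRotate (n+1) i : Fin (n+1)) : ℕ) = (i : ℕ) + 1 := by
  apply coe_finRotate_of_ne_last
  intro hlast
  rw [hlast] at hi
  simp [Fin.last] at hi

lemma coe_finRotate_symm_of_pos {n : ℕ} {q : Fin (n+1)} (hq : 0 < (q : ℕ)) :
    (((finRotate (n+1)).symm q : Fin (n+1)) : ℕ) + 1 = (q : ℕ) := by
  set r := (finRotate (n+1)).symm q with hr
  have hfr : finRotate (n+1) r = q := Equiv.apply_symm_apply _ _
  rcases eq_or_ne r (Fin.last n) with h | h
  · exfalso
    have := coe_finRotate (n := n) r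
    rw [hfr, if_pos h] at this
    omega
  · have := coe_finRotate_of_ne_last h
    rw [hfr] at this
    omega

theorem sum_eps_eq_sum_delta (t : ℕ) (ht : 2 ≤ t) (h : Equiv.Perm (Fin t)) :
    ∑ p ∈ Finset.univ.filter
        (fun p : Fin t × Fin t => p.1 < p.2 ∧ (p.1 : ℕ) + 1 < t ∧ (p.2 : ℕ) + 1 < t),
      epsBW 1 h p.1 p.2
      = ∑ p ∈ Finset.univ.filter
          (fun p : Fin t × Fin t => p.1 < p.2 ∧ 0 < (p.1 : ℕ) ∧ 0 < (p.2 : ℕ)),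
        deltaBW 1 h p.1 p.2 := by
  obtain ⟨n, rfl⟩ : ∃ n, t = n + 1 := ⟨t - 1, by omega⟩
  refine Finset.sum_nbij'
    (fun p => (finRotate (n+1) p.1, finRotate (n+1) p.2))
    (fun p => ((finRotate (n+1)).symm p.1, (finRotate (n+1)).symm p.2))
    ?_ ?_ ?_ ?_ ?_
  · rintro ⟨i, j⟩ hij
    simp only [Finset.mem_filter, Finset.mem_univ, true_and] at hij ⊢
    obtain ⟨h1, h2, h3⟩ := hij
    have e1 := coe_finRotate_of_lt h2
    have e2 := coe_finRotate_of_lt h3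
    have h1' : (i : ℕ) < (j : ℕ) := h1
    refine ⟨?_, by omega, by omega⟩
    rw [Fin.lt_def]; omega
  · rintro ⟨i, j⟩ hij
    simp only [Finset.mem_filter, Finset.mem_univ, true_and] at hij ⊢
    obtain ⟨h1, h2, h3⟩ := hij
    have e1 := coe_finRotate_symm_of_pos h2
    have e2 := coe_finRotate_symm_of_pos h3
    have h1' : (i : ℕ) < (j : ℕ) := h1
    refine ⟨?_, by omega, by omega⟩
    rw [Fin.lt_def]; omega
  · rintro ⟨i, j⟩ _
    simp only [Equiv.symm_apply_apply]
  · rintro ⟨i, j⟩ _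
    simp only [Equiv.apply_symm_apply]
  · rintro ⟨i, j⟩ hij
    simp only [Finset.mem_filter, Finset.mem_univ, true_and] at hij
    obtain ⟨h1, h2, h3⟩ := hij
    have e1 := coe_finRotate_of_lt h2
    have e2 := coe_finRotate_of_lt h3
    have h1' : (i : ℕ) < (j : ℕ) := h1
    have hfij : finRotate (n+1) i < finRotate (n+1) j := by rw [Fin.lt_def]; omega
    dsimp only [epsBW, deltaBW]
    rw [Equiv.Perm.one_apply i, Equiv.Perm.one_apply j, Equiv.Perm.one_apply (finRotate (n+1) i),
      Equiv.Perm.one_apply (finRotate (n+1) j),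
      show hA h (finRotate (n+1) i) = h i by simp [hA],
      show hA h (finRotate (n+1) j) = h j by simp [hA]]
    rw [if_pos h1, if_pos hfij]
    by_cases hh : h i < h j
    · rw [if_pos hh, if_pos hh]
      have hji : ¬ j < i := by rw [Fin.lt_def]; omega
      have hfji : ¬ finRotate (n+1) j < finRotate (n+1) i := by rw [Fin.lt_def]; omega
      rw [if_neg hji, if_pos h1, if_neg hfji, if_pos hfij]
    · rw [if_neg hh, if_neg hh]
      rw [if_neg (lt_irrefl i), if_neg (lt_irrefl i),
        if_neg (lt_irrefl (finRotate (n+1) j)), if_neg (lt_irrefl (finRotate (n+1) j))]
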